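/- Let 0 < q < 1, p > 0 and 0 < a < p be real numbers, and let M(c,Q) = ∑_{n=0}^∞ c^n Q^{n(n+1)/2}. Then M(-q^{-a}, q^p) - q^a · M(-q^a, q^p) = f(-q^p) · [a,p;q]. -/

import Mathlib

open Real Finset

-- summability of logs of 1 - c Q^n
lemma log_summable {Q c : ℝ} (hQ0 : 0 < Q) (hQ1 : Q < 1) (hc0 : 0 ≤ c) (hc1 : c < 1) :
    Summable fun n : ℕ => Real.log (1 - c * Q ^ n) := by
  have hpos : ∀ n : ℕ, 0 < 1 - c * Q ^ n := by
    intro n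
    have h1 : c * Q ^ n ≤ c * 1 := by
      apply mul_le_mul_of_nonneg_left _ hc0
      exact pow_le_one₀ hQ0.le hQ1.le
    nlinarith
  have key : ∀ n : ℕ, |Real.log (1 - c * Q ^ n)| ≤ (1 - c)⁻¹ * Q ^ n := by
    intro n
    have h0 : 0 < 1 - c := by linarith
    have hQn : 0 < Q ^ n := pow_pos hQ0 n
    have hle : 1 - c ≤ 1 - c * Q ^ n := by nlinarith [pow_le_one₀ hQ0.le hQ1.le (n := n)]
    have hlog : Real.log (1 - c * Q ^ n) ≤ 0 := by
      apply Real.log_nonpos (le_of_lt (hpos n))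
      nlinarith
    rw [abs_of_nonpos hlog]
    have := Real.log_le_sub_one_of_pos (x := (1 - c * Q ^ n)⁻¹) (inv_pos.mpr (hpos n))
    rw [Real.log_inv] at this
    have h2 : (1 - c * Q ^ n)⁻¹ - 1 = (c * Q ^ n) / (1 - c * Q ^ n) := by
      rw [eq_div_iff (ne_of_gt (hpos n)), sub_mul, inv_mul_cancel₀ (ne_of_gt (hpos n))]
      ring
    rw [h2] at this
    have h3 : (c * Q ^ n) / (1 - c * Q ^ n) ≤ (c * Q ^ n) / (1 - c) := by
      exact div_le_div_of_nonneg_left (by positivity) h0 hle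
    have h4 : (c * Q ^ n) / (1 - c) ≤ (1 - c)⁻¹ * Q ^ n := by
      rw [div_eq_inv_mul]
      apply mul_le_mul_of_nonneg_left _ (by positivity)
      nlinarith
    linarith
  apply Summable.of_abs
  apply Summable.of_nonneg_of_le (fun n => abs_nonneg _) key
  exact (summable_geometric_of_lt_one hQ0.le hQ1).mul_left _

lemma hasProd_one_sub {Q c : ℝ} (hQ0 : 0 < Q) (hQ1 : Q < 1) (hc0 : 0 ≤ c) (hc1 : c < 1) :
    HasProd (fun n : ℕ => 1 - c * Q ^ n) (∏' n : ℕ, (1 - c * Q ^ n)) ∧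
      0 < ∏' n : ℕ, (1 - c * Q ^ n) := by
  have hpos : ∀ n : ℕ, 0 < 1 - c * Q ^ n := by
    intro n
    nlinarith [pow_le_one₀ hQ0.le hQ1.le (n := n), pow_pos hQ0 n, mul_le_mul_of_nonneg_left (pow_le_one₀ hQ0.le hQ1.le (n := n)) hc0]
  have hsum := log_summable hQ0 hQ1 hc0 hc1
  have h1 := Real.hasProd_of_hasSum_log hpos hsum.hasSum
  rw [Real.rexp_tsum_eq_tprod hpos hsum] at h1
  refine ⟨h1, ?_⟩
  have h3 := Real.rexp_tsum_eq_tprod hpos hsum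
  rw [← h3]
  exact Real.exp_pos _

noncomputable def Ppoch (Q : ℝ) (n : ℕ) : ℝ := ∏ i ∈ Finset.range n, (1 - Q ^ (i + 1))

noncomputable def Bq (Q : ℝ) (N k : ℕ) : ℝ :=
  if k ≤ N then Ppoch Q N / (Ppoch Q k * Ppoch Q (N - k)) else 0

lemma Ppoch_pos {Q : ℝ} (hQ0 : 0 < Q) (hQ1 : Q < 1) (n : ℕ) : 0 < Ppoch Q n := by
  apply Finset.prod_pos
  intro i _
  have : Q ^ (i + 1) < 1 := pow_lt_one₀ hQ0.le hQ1 (Nat.succ_ne_zero i)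
  linarith

lemma Ppoch_succ (Q : ℝ) (n : ℕ) : Ppoch Q (n + 1) = Ppoch Q n * (1 - Q ^ (n + 1)) :=
  Finset.prod_range_succ _ _

lemma Ppoch_zero (Q : ℝ) : Ppoch Q 0 = 1 := rfl

lemma Ppoch_anti {Q : ℝ} (hQ0 : 0 < Q) (hQ1 : Q < 1) : Antitone (Ppoch Q) := by
  apply antitone_nat_of_succ_le
  intro n
  rw [Ppoch_succ]
  have h1 := Ppoch_pos hQ0 hQ1 n
  have h2 : 0 < Q ^ (n + 1) := pow_pos hQ0 _
  nlinarith

lemma Bq_zero {Q : ℝ} (hQ0 : 0 < Q) (hQ1 : Q < 1) (N : ℕ) : Bq Q N 0 = 1 := by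
  rw [Bq, if_pos (Nat.zero_le N), Ppoch_zero, one_mul, Nat.sub_zero,
    div_self (ne_of_gt (Ppoch_pos hQ0 hQ1 N))]

lemma Bq_self {Q : ℝ} (hQ0 : 0 < Q) (hQ1 : Q < 1) (N : ℕ) : Bq Q N N = 1 := by
  rw [Bq, if_pos le_rfl, Nat.sub_self, Ppoch_zero, mul_one,
    div_self (ne_of_gt (Ppoch_pos hQ0 hQ1 N))]

lemma Bq_nonneg {Q : ℝ} (hQ0 : 0 < Q) (hQ1 : Q < 1) (N k : ℕ) : 0 ≤ Bq Q N k := by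
  unfold Bq
  split
  · have p1 := Ppoch_pos hQ0 hQ1 N
    have p2 := Ppoch_pos hQ0 hQ1 k
    have p3 := Ppoch_pos hQ0 hQ1 (N - k)
    positivity
  · exact le_refl 0

lemma Bq_pascal {Q : ℝ} (hQ0 : 0 < Q) (hQ1 : Q < 1) (N k : ℕ) :
    Bq Q (N + 1) (k + 1) = Bq Q N (k + 1) + Q ^ (N - k) * Bq Q N k := by
  rcases le_or_gt (k + 1) (N + 1) with h | h
  · have hkN : k ≤ N := Nat.lt_succ_iff.mp h
    rcases eq_or_lt_of_le hkN with rfl | hklt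
    · rw [Bq_self hQ0 hQ1, Bq_self hQ0 hQ1, Nat.sub_self, pow_zero, one_mul,
        Bq, if_neg (by omega)]
      norm_num
    · have hk1N : k + 1 ≤ N := hklt
      have e1 : Bq Q (N+1) (k+1) = Ppoch Q (N+1) / (Ppoch Q (k+1) * Ppoch Q (N - k)) := by
        rw [Bq, if_pos h, Nat.succ_sub_succ]
      have e2 : Bq Q N (k+1) = Ppoch Q N / (Ppoch Q (k+1) * Ppoch Q (N - k - 1)) := by
        rw [Bq, if_pos hk1N, Nat.sub_sub]
      have e3 : Bq Q N k = Ppoch Q N / (Ppoch Q k * Ppoch Q (N - k)) := by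
        rw [Bq, if_pos hkN]
      have hNk1 : N - k = (N - k - 1) + 1 := by omega
      have f1 : Ppoch Q (N + 1) = Ppoch Q N * (1 - Q ^ (N - k) * Q ^ (k + 1)) := by
        have hpow : Q ^ (N - k) * Q ^ (k + 1) = Q ^ (N + 1) := by
          rw [← pow_add]; congr 1; omega
        rw [Ppoch_succ, hpow]
      have f2 : Ppoch Q (N - k) = Ppoch Q (N - k - 1) * (1 - Q ^ (N - k)) := by
        rw [hNk1, Ppoch_succ, ← hNk1]
      have f3 : Ppoch Q (k + 1) = Ppoch Q k * (1 - Q ^ (k + 1)) := Ppoch_succ Q k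
      rw [e1, e2, e3, f1, f3, f2]
      have p1 : Ppoch Q N ≠ 0 := ne_of_gt (Ppoch_pos hQ0 hQ1 N)
      have p2 : Ppoch Q k ≠ 0 := ne_of_gt (Ppoch_pos hQ0 hQ1 k)
      have p3 : Ppoch Q (N - k - 1) ≠ 0 := ne_of_gt (Ppoch_pos hQ0 hQ1 _)
      have p5 : (1 - Q ^ (N - k)) ≠ 0 := by
        have : Q ^ (N-k) < 1 := pow_lt_one₀ hQ0.le hQ1 (by omega); linarith
      have p6 : (1 - Q ^ (k + 1)) ≠ 0 := by
        have : Q ^ (k+1) < 1 := pow_lt_one₀ hQ0.le hQ1 (Nat.succ_ne_zero _); linarith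
      field_simp
      ring
  · have h1 : ¬ (k + 1 ≤ N + 1) := not_le.mpr h
    have h2 : ¬ (k + 1 ≤ N) := by omega
    have h3 : ¬ (k ≤ N) := by omega
    simp [Bq, h1, h2, h3]

lemma Bq_big {Q : ℝ} (N k : ℕ) (h : N < k) : Bq Q N k = 0 := by
  rw [Bq, if_neg (not_le.mpr h)]

lemma tri_succ (k : ℕ) : (k + 1) * k / 2 = k * (k - 1) / 2 + k := by
  cases k with
  | zero => rfl
  | succ s =>
    rw [Nat.add_sub_cancel, show (s + 1 + 1) * (s + 1) = (s + 1) * s + (s + 1) * 2 by ring,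
      Nat.add_mul_div_right _ _ (by norm_num)]

lemma qbinom {Q : ℝ} (hQ0 : 0 < Q) (hQ1 : Q < 1) (z : ℝ) (N : ℕ) :
    ∏ j ∈ Finset.range N, (1 - z * Q ^ j) =
      ∑ k ∈ Finset.range (N + 1), (-1 : ℝ) ^ k * Bq Q N k * Q ^ (k * (k - 1) / 2) * z ^ k := by
  induction N with
  | zero => simp [Bq_zero hQ0 hQ1]
  | succ N ih =>
    rw [Finset.prod_range_succ, ih]
    set g : ℕ → ℝ := fun k => (-1 : ℝ) ^ k * Bq Q N k * Q ^ (k * (k - 1) / 2) * z ^ k with hg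
    have key : ∀ k ∈ Finset.range (N + 1),
        (-1 : ℝ) ^ (k+1) * Bq Q (N+1) (k+1) * Q ^ ((k+1) * (k+1-1) / 2) * z ^ (k+1)
          = g (k+1) - z * Q ^ N * g k := by
      intro k hk
      have hkN : k ≤ N := Nat.lt_succ_iff.mp (Finset.mem_range.mp hk)
      rw [Bq_pascal hQ0 hQ1]
      have hpow : Q ^ ((k+1) * (k+1-1) / 2) * Q ^ (N - k) = Q ^ N * Q ^ (k * (k-1) / 2) := by
        rw [← pow_add, ← pow_add, Nat.add_sub_cancel, tri_succ]
        congr 1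
        omega
      simp only [hg]
      rw [Nat.add_sub_cancel] at hpow ⊢
      calc (-1:ℝ)^(k+1) * (Bq Q N (k+1) + Q^(N-k) * Bq Q N k) * Q^((k+1)*k/2) * z^(k+1)
          = (-1:ℝ)^(k+1) * Bq Q N (k+1) * Q^((k+1)*k/2) * z^(k+1)
            + (-1:ℝ)^(k+1) * Bq Q N k * (Q^((k+1)*k/2) * Q^(N-k)) * z^(k+1) := by ring
        _ = _ := by rw [hpow]; ring
    rw [Finset.sum_range_succ' (fun k => (-1:ℝ)^k * Bq Q (N+1) k * Q^(k*(k-1)/2) * z^k) (N+1)]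
    rw [Finset.sum_congr rfl key]
    rw [Finset.sum_sub_distrib, ← Finset.mul_sum]
    have h0 : (-1:ℝ)^0 * Bq Q (N+1) 0 * Q^(0*(0-1)/2) * z^0 = g 0 := by
      simp [hg, Bq_zero hQ0 hQ1]
    rw [h0]
    have htop : g (N + 1) = 0 := by
      simp only [hg, Bq_big N (N+1) (Nat.lt_succ_self N)]
      ring
    have hsum : ∑ k ∈ Finset.range (N+1), g (k+1) + g 0
        = ∑ k ∈ Finset.range (N+1), g k := by
      rw [← Finset.sum_range_succ' g (N+1), Finset.sum_range_succ, htop, add_zero]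
    calc (∑ k ∈ Finset.range (N+1), g k) * (1 - z * Q ^ N)
        = (∑ k ∈ Finset.range (N+1), g k) - z * Q ^ N * ∑ k ∈ Finset.range (N+1), g k := by ring
      _ = (∑ k ∈ Finset.range (N+1), g (k+1) + g 0) - z * Q ^ N * ∑ k ∈ Finset.range (N+1), g k := by
          rw [hsum]
      _ = _ := by ring

noncomputable def Tj (Q w : ℝ) (j : ℤ) : ℝ := (-1 : ℝ) ^ j * w ^ (-j) * Q ^ (j * (j + 1) / 2)

lemma int_tri_cast (k : ℕ) : ((k * (k - 1) / 2 : ℕ) : ℤ) = (k : ℤ) * ((k : ℤ) - 1) / 2 := by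
  cases k with
  | zero => simp
  | succ s =>
    rw [Int.natCast_ediv]
    push_cast
    ring_nf

lemma exponent_id (N k : ℤ) :
    ((k - N) * ((k - N) + 1)) / 2 - (N * (N - 1)) / 2 = (k * (k - 1)) / 2 + (1 - N) * k := by
  have h1 : (2 : ℤ) ∣ (k - N) * ((k - N) + 1) := (Int.even_mul_succ_self (k - N)).two_dvd
  have h2 : (2 : ℤ) ∣ N * (N - 1) := by
    have := (Int.even_mul_succ_self (N - 1)).two_dvd
    have e : (N - 1) * ((N - 1) + 1) = N * (N - 1) := by ring
    rwa [e] at this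
  have h3 : (2 : ℤ) ∣ k * (k - 1) := by
    have := (Int.even_mul_succ_self (k - 1)).two_dvd
    have e : (k - 1) * ((k - 1) + 1) = k * (k - 1) := by ring
    rwa [e] at this
  have hrel : (k - N) * ((k - N) + 1) - N * (N - 1) = k * (k - 1) + 2 * ((1 - N) * k) := by ring
  omega

lemma prod_zpow_sum (x : ℝ) (hx : x ≠ 0) (f : ℕ → ℤ) (N : ℕ) :
    ∏ j ∈ Finset.range N, x ^ (f j) = x ^ (∑ j ∈ Finset.range N, f j) := by
  induction N with
  | zero => simp
  | succ N ih => rw [Finset.prod_range_succ, Finset.sum_range_succ, ih, zpow_add₀ hx]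

lemma sum_range_neg_id (N : ℕ) :
    ∑ j ∈ Finset.range N, (-(j : ℤ)) = -((N : ℤ) * ((N : ℤ) - 1) / 2) := by
  rw [Finset.sum_neg_distrib]
  congr 1
  induction N with
  | zero => simp
  | succ N ih =>
    rw [Finset.sum_range_succ, ih]
    have h2 : (2:ℤ) ∣ (N:ℤ) * ((N:ℤ) - 1) := by
      have := (Int.even_mul_succ_self ((N:ℤ) - 1)).two_dvd
      have e : ((N:ℤ) - 1) * (((N:ℤ) - 1) + 1) = (N:ℤ) * ((N:ℤ) - 1) := by ring
      rwa [e] at this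
    have h3 : (2:ℤ) ∣ ((N:ℤ) + 1) * ((N:ℤ) + 1 - 1) := by
      have := (Int.even_mul_succ_self (N:ℤ)).two_dvd
      have e : (N:ℤ) * ((N:ℤ) + 1) = ((N:ℤ) + 1) * ((N:ℤ) + 1 - 1) := by ring
      rwa [e] at this
    have hab : ((N:ℤ) + 1) * ((N:ℤ) + 1 - 1) = (N:ℤ) * ((N:ℤ) - 1) + 2 * N := by ring
    push_cast
    omega

lemma neg_factor {Q w : ℝ} (hQne : Q ≠ 0) (hwne : w ≠ 0) (j : ℕ) :
    1 - w⁻¹ * Q ^ (-(j:ℤ)) = (-w⁻¹ * Q ^ (-(j:ℤ))) * (1 - w * Q ^ j) := by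
  have h1 : Q ^ (-(j:ℤ)) * Q ^ j = 1 := by
    rw [← zpow_natCast Q j, ← zpow_add₀ hQne]
    simp
  field_simp
  linear_combination (-w) * h1
lemma star_id {Q w : ℝ} (hQ0 : 0 < Q) (hQ1 : Q < 1) (hw0 : 0 < w) (N : ℕ) :
    (∏ m ∈ Finset.range N, (1 - w * Q ^ m)) * (∏ m ∈ Finset.range N, (1 - (Q / w) * Q ^ m))
      = ∑ k ∈ Finset.range (2 * N + 1), Bq Q (2 * N) k * Tj Q w ((k : ℤ) - N) := by
  have hQne : Q ≠ 0 := ne_of_gt hQ0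
  have hwne : w ≠ 0 := ne_of_gt hw0
  set z : ℝ := w⁻¹ * Q ^ ((1 : ℤ) - N) with hz
  have hqb := qbinom hQ0 hQ1 z (2 * N)
  set C : ℝ := (-w⁻¹) ^ N * Q ^ (-((N:ℤ) * ((N:ℤ) - 1) / 2)) with hC
  have hCne : C ≠ 0 := by
    apply mul_ne_zero
    · exact pow_ne_zero _ (by simp [hwne])
    · exact zpow_ne_zero _ hQne
  -- LHS factorization
  have lhs_eq : ∏ j ∈ Finset.range (2 * N), (1 - z * Q ^ j)
      = C * ((∏ m ∈ Finset.range N, (1 - w * Q ^ m)) *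
             (∏ m ∈ Finset.range N, (1 - (Q / w) * Q ^ m))) := by
    rw [two_mul, Finset.prod_range_add]
    have second : ∀ i ∈ Finset.range N, (1 - z * Q ^ (N + i)) = 1 - (Q / w) * Q ^ i := by
      intro i _
      rw [hz]
      have : Q ^ ((1:ℤ) - N) * Q ^ (N + i) = Q * Q ^ i := by
        rw [← zpow_natCast Q (N + i), ← zpow_add₀ hQne]
        have h5 : (1:ℤ) - (N:ℤ) + ((N + i : ℕ) : ℤ) = 1 + (i:ℤ) := by push_cast; ring
        rw [h5, zpow_add₀ hQne, zpow_one, zpow_natCast]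
      rw [mul_assoc, this]
      ring
    rw [Finset.prod_congr rfl second]
    have first : ∏ j ∈ Finset.range N, (1 - z * Q ^ j)
        = C * ∏ m ∈ Finset.range N, (1 - w * Q ^ m) := by
      have refl1 : ∏ j ∈ Finset.range N, (1 - z * Q ^ (N - 1 - j))
          = ∏ j ∈ Finset.range N, (1 - z * Q ^ j) :=
        Finset.prod_range_reflect (fun j => 1 - z * Q ^ j) N
      rw [← refl1]
      have perfac : ∀ j ∈ Finset.range N, 1 - z * Q ^ (N - 1 - j)
          = (-w⁻¹ * Q ^ (-(j:ℤ))) * (1 - w * Q ^ j) := by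
        intro j hj
        have hjN : j < N := Finset.mem_range.mp hj
        have : z * Q ^ (N - 1 - j) = w⁻¹ * Q ^ (-(j:ℤ)) := by
          rw [hz, mul_assoc]
          congr 1
          rw [← zpow_natCast Q (N - 1 - j), ← zpow_add₀ hQne]
          congr 1
          have : ((N - 1 - j : ℕ) : ℤ) = (N:ℤ) - 1 - j := by omega
          rw [this]
          ring
        rw [this, neg_factor hQne hwne]
      rw [Finset.prod_congr rfl perfac, Finset.prod_mul_distrib]
      congr 1
      rw [hC]
      have : ∀ j ∈ Finset.range N, -w⁻¹ * Q ^ (-(j:ℤ)) = -w⁻¹ * Q ^ (-(j:ℤ)) := fun _ _ => rfl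
      rw [Finset.prod_mul_distrib, Finset.prod_const, prod_zpow_sum Q hQne, sum_range_neg_id,
        Finset.card_range]
    rw [first]
    ring
  -- RHS per-term
  have rhs_eq : ∀ k ∈ Finset.range (2 * N + 1),
      (-1 : ℝ) ^ k * Bq Q (2 * N) k * Q ^ (k * (k - 1) / 2) * z ^ k
        = C * (Bq Q (2 * N) k * Tj Q w ((k : ℤ) - N)) := by
    intro k _
    rw [hz, hC, Tj]
    have e1 : (w⁻¹ * Q ^ ((1:ℤ) - N)) ^ k = w ^ (-(k:ℤ)) * Q ^ (((1:ℤ) - N) * k) := by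
      rw [mul_pow, inv_pow, ← zpow_natCast w k, ← zpow_neg, ← zpow_natCast (Q ^ ((1:ℤ) - N)) k,
        ← zpow_mul]
    rw [e1]
    have e2 : (Q : ℝ) ^ (k * (k - 1) / 2) = Q ^ (((k:ℤ) * ((k:ℤ) - 1) / 2)) := by
      rw [← zpow_natCast Q (k * (k - 1) / 2), int_tri_cast]
    rw [e2]
    have e3 : (-w⁻¹ : ℝ) ^ N = (-1 : ℝ) ^ (N : ℤ) * w ^ (-(N:ℤ)) := by
      rw [show (-w⁻¹ : ℝ) = -1 * w⁻¹ by ring, mul_pow, inv_pow, ← zpow_natCast w N, ← zpow_neg,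
        ← zpow_natCast (-1 : ℝ) N]
    rw [e3]
    have s1 : (-1 : ℝ) ^ k = (-1 : ℝ) ^ (k : ℤ) := by rw [zpow_natCast]
    rw [s1]
    have s2 : (-1 : ℝ) ^ ((N : ℤ)) * (-1 : ℝ) ^ ((k : ℤ) - N) = (-1 : ℝ) ^ (k : ℤ) := by
      rw [← zpow_add₀ (by norm_num : (-1:ℝ) ≠ 0)]
      congr 1
      ring
    have s3 : w ^ (-(N:ℤ)) * w ^ (-((k:ℤ) - N)) = w ^ (-(k:ℤ)) := by
      rw [← zpow_add₀ hwne]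
      congr 1
      ring
    have s4 : Q ^ (-((N:ℤ) * ((N:ℤ) - 1) / 2)) * Q ^ (((k:ℤ) - N) * (((k:ℤ) - N) + 1) / 2)
        = Q ^ ((k:ℤ) * ((k:ℤ) - 1) / 2) * Q ^ (((1:ℤ) - N) * k) := by
      rw [← zpow_add₀ hQne, ← zpow_add₀ hQne]
      congr 1
      have := exponent_id (N : ℤ) (k : ℤ)
      omega
    calc (-1:ℝ) ^ (k:ℤ) * Bq Q (2*N) k * Q ^ ((k:ℤ) * ((k:ℤ) - 1) / 2)
          * (w ^ (-(k:ℤ)) * Q ^ (((1:ℤ) - N) * k))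
        = ((-1:ℝ) ^ (k:ℤ)) * (w ^ (-(k:ℤ)))
            * (Q ^ ((k:ℤ) * ((k:ℤ) - 1) / 2) * Q ^ (((1:ℤ) - N) * k)) * Bq Q (2*N) k := by ring
      _ = ((-1:ℝ) ^ ((N:ℤ)) * (-1:ℝ) ^ ((k:ℤ) - N)) * (w ^ (-(N:ℤ)) * w ^ (-((k:ℤ) - N)))
            * (Q ^ (-((N:ℤ) * ((N:ℤ) - 1) / 2)) * Q ^ (((k:ℤ) - N) * (((k:ℤ) - N) + 1) / 2))
            * Bq Q (2*N) k := by rw [s2, s3, s4]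
      _ = (-1:ℝ) ^ ((N:ℤ)) * w ^ (-(N:ℤ)) * Q ^ (-((N:ℤ) * ((N:ℤ) - 1) / 2))
            * (Bq Q (2*N) k * ((-1:ℝ) ^ ((k:ℤ) - N) * w ^ (-((k:ℤ) - N))
              * Q ^ (((k:ℤ) - N) * (((k:ℤ) - N) + 1) / 2))) := by ring
  rw [lhs_eq, Finset.sum_congr rfl rhs_eq, ← Finset.mul_sum] at hqb
  exact mul_left_cancel₀ hCne hqb
noncomputable def Pinf (Q : ℝ) : ℝ := ∏' n : ℕ, (1 - Q ^ (n + 1))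

section analytic
variable {Q w : ℝ}

lemma pinf_hasProd (hQ0 : 0 < Q) (hQ1 : Q < 1) :
    HasProd (fun n : ℕ => 1 - Q ^ (n + 1)) (Pinf Q) ∧ 0 < Pinf Q := by
  have h := hasProd_one_sub hQ0 hQ1 hQ0.le hQ1
  have e : (fun n : ℕ => 1 - Q * Q ^ n) = fun n : ℕ => 1 - Q ^ (n + 1) := by
    funext n; rw [pow_succ']
  rw [e] at h
  exact ⟨h.1, h.2⟩

lemma tendsto_Ppoch (hQ0 : 0 < Q) (hQ1 : Q < 1) :
    Filter.Tendsto (Ppoch Q) Filter.atTop (nhds (Pinf Q)) := by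
  have h := (pinf_hasProd hQ0 hQ1).1.tendsto_prod_nat
  exact h

lemma Pinf_le_Ppoch (hQ0 : 0 < Q) (hQ1 : Q < 1) (k : ℕ) : Pinf Q ≤ Ppoch Q k := by
  apply le_of_tendsto (tendsto_Ppoch hQ0 hQ1)
  filter_upwards [Filter.eventually_ge_atTop k] with n hn
  exact Ppoch_anti hQ0 hQ1 hn

lemma Bq_le (hQ0 : 0 < Q) (hQ1 : Q < 1) (N k : ℕ) : Bq Q N k ≤ (Pinf Q)⁻¹ := by
  have hPinf := (pinf_hasProd hQ0 hQ1).2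
  unfold Bq
  split
  · rename_i h
    have p2 := Ppoch_pos hQ0 hQ1 k
    have p3 := Ppoch_pos hQ0 hQ1 (N - k)
    have h1 : Ppoch Q N ≤ Ppoch Q (N - k) := Ppoch_anti hQ0 hQ1 (Nat.sub_le N k)
    have h2 : Ppoch Q N / (Ppoch Q k * Ppoch Q (N - k)) ≤ (Ppoch Q k)⁻¹ := by
      rw [div_le_iff₀ (by positivity)]
      calc Ppoch Q N ≤ Ppoch Q (N - k) := h1
        _ = (Ppoch Q k)⁻¹ * (Ppoch Q k * Ppoch Q (N - k)) := by
            field_simp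
    refine h2.trans ?_
    exact inv_anti₀ hPinf (Pinf_le_Ppoch hQ0 hQ1 k)
  · positivity
end analytic
lemma tri_cast' (n : ℕ) : ((n * (n + 1) / 2 : ℕ) : ℤ) = (n : ℤ) * ((n : ℤ) + 1) / 2 := by
  have h := int_tri_cast (n + 1)
  rw [Nat.add_sub_cancel] at h
  rw [Nat.mul_comm] at h
  rw [h]
  congr 1
  push_cast
  ring

lemma neg_one_zpow_int (j : ℤ) : ((-1 : ℝ) ^ j)⁻¹ = (-1 : ℝ) ^ j := by
  have h : (-1 : ℝ) ^ j * (-1 : ℝ) ^ j = 1 := by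
    rw [← zpow_add₀ (by norm_num : (-1:ℝ) ≠ 0), show j + j = 2 * j by ring, zpow_mul]
    norm_num
  exact inv_eq_of_mul_eq_one_left h

section tjlemmas
variable {Q w : ℝ}

lemma Tj_nat (hw0 : w ≠ 0) (n : ℕ) :
    Tj Q w (n : ℤ) = (-w⁻¹) ^ n * Q ^ (n * (n + 1) / 2) := by
  rw [Tj, show (-w⁻¹ : ℝ) = -1 * w⁻¹ by ring, mul_pow]
  rw [← zpow_natCast Q (n * (n + 1) / 2), tri_cast']
  rw [← zpow_natCast (-1 : ℝ) n, inv_pow, ← zpow_natCast w n, ← zpow_neg]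

lemma Tj_negSucc (n : ℕ) :
    Tj Q w (-((n : ℤ) + 1)) = -(w * ((-w) ^ n * Q ^ (n * (n + 1) / 2))) := by
  rw [Tj]
  have e1 : (-1 : ℝ) ^ (-((n : ℤ) + 1)) = (-1 : ℝ) ^ (n + 1) := by
    rw [zpow_neg, neg_one_zpow_int, show ((n : ℤ) + 1) = ((n + 1 : ℕ) : ℤ) by push_cast; ring,
      zpow_natCast]
  have e2 : w ^ (-(-((n : ℤ) + 1))) = w ^ (n + 1) := by
    rw [neg_neg, show ((n : ℤ) + 1) = ((n + 1 : ℕ) : ℤ) by push_cast; ring, zpow_natCast]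
  have e3 : Q ^ ((-((n : ℤ) + 1)) * ((-((n : ℤ) + 1)) + 1) / 2) = Q ^ (n * (n + 1) / 2) := by
    rw [← zpow_natCast Q (n * (n + 1) / 2), tri_cast']
    congr 1
    have hd : (2:ℤ) ∣ (n:ℤ) * ((n:ℤ) + 1) := (Int.even_mul_succ_self (n:ℤ)).two_dvd
    have : (-((n : ℤ) + 1)) * ((-((n : ℤ) + 1)) + 1) = (n:ℤ) * ((n:ℤ) + 1) := by ring
    rw [this]
  rw [e1, e2, e3]
  ring
end tjlemmas
section summab
variable {Q w : ℝ}

lemma abs_neg_one_zpow' (j : ℤ) : |(-1 : ℝ) ^ j| = 1 := by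
  rcases Int.even_or_odd j with h | h
  · rw [h.neg_one_zpow]; norm_num
  · rw [Odd.neg_one_zpow h]; norm_num

lemma absTj (hQ0 : 0 < Q) (hw0 : 0 < w) (j : ℤ) :
    |Tj Q w j| = w ^ (-j) * Q ^ (j * (j + 1) / 2) := by
  rw [Tj, abs_mul, abs_mul, abs_neg_one_zpow', one_mul,
    abs_of_pos (zpow_pos hw0 _), abs_of_pos (zpow_pos hQ0 _)]

lemma summable_absTj (hQ0 : 0 < Q) (hQ1 : Q < 1) (hw0 : 0 < w) :
    Summable (fun j : ℤ => |Tj Q w j|) := by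
  have hQne : Q ≠ 0 := ne_of_gt hQ0
  have hwne : w ≠ 0 := ne_of_gt hw0
  apply Summable.of_nat_of_neg
  · apply summable_of_ratio_norm_eventually_le (r := 1/2) (by norm_num)
    have hev : ∀ᶠ n : ℕ in Filter.atTop, Q ^ (n + 1) ≤ w / 2 := by
      have ht : Filter.Tendsto (fun n : ℕ => Q ^ (n + 1)) Filter.atTop (nhds 0) :=
        (tendsto_pow_atTop_nhds_zero_of_lt_one hQ0.le hQ1).comp
          (Filter.tendsto_add_atTop_nat 1)
      exact ht.eventually_le_const (by positivity)
    filter_upwards [hev] with n hn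
    have key : |Tj Q w ((n + 1 : ℕ) : ℤ)| = (w⁻¹ * Q ^ (n + 1)) * |Tj Q w (n : ℤ)| := by
      rw [absTj hQ0 hw0, absTj hQ0 hw0]
      have ew : w ^ (-((n + 1 : ℕ) : ℤ)) = w⁻¹ * w ^ (-(n : ℤ)) := by
        rw [← zpow_neg_one, ← zpow_add₀ hwne]
        congr 1
        push_cast; ring
      have eQ : Q ^ (((n + 1 : ℕ) : ℤ) * (((n + 1 : ℕ) : ℤ) + 1) / 2)
          = Q ^ ((n : ℕ) + 1) * Q ^ ((n : ℤ) * ((n : ℤ) + 1) / 2) := by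
        rw [← zpow_natCast Q (n + 1), ← zpow_add₀ hQne]
        congr 1
        have h1 : (2:ℤ) ∣ (n:ℤ) * ((n:ℤ) + 1) := (Int.even_mul_succ_self _).two_dvd
        have h2 : (2:ℤ) ∣ ((n:ℤ) + 1) * (((n:ℤ) + 1) + 1) := (Int.even_mul_succ_self _).two_dvd
        have h3 : ((n:ℤ) + 1) * (((n:ℤ) + 1) + 1) = (n:ℤ) * ((n:ℤ) + 1) + 2 * ((n:ℤ) + 1) := by
          ring
        push_cast
        omega
      rw [ew, eQ]
      ring
    rw [Real.norm_eq_abs, Real.norm_eq_abs, abs_abs, abs_abs, key]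
    have hTnn : (0:ℝ) ≤ |Tj Q w (n : ℤ)| := abs_nonneg _
    have hr : w⁻¹ * Q ^ (n + 1) ≤ 1/2 := by
      rw [inv_mul_le_iff₀ hw0]
      linarith
    exact mul_le_mul_of_nonneg_right hr hTnn
  · apply summable_of_ratio_norm_eventually_le (r := 1/2) (by norm_num)
    have hev : ∀ᶠ n : ℕ in Filter.atTop, Q ^ n ≤ 1 / (2 * w) := by
      have ht := tendsto_pow_atTop_nhds_zero_of_lt_one hQ0.le hQ1
      exact ht.eventually_le_const (by positivity)
    filter_upwards [hev] with n hn
    have key : |Tj Q w (-((n + 1 : ℕ) : ℤ))| = (w * Q ^ n) * |Tj Q w (-(n : ℤ))| := by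
      rw [absTj hQ0 hw0, absTj hQ0 hw0]
      have ew : w ^ (-(-((n + 1 : ℕ) : ℤ))) = w * w ^ (-(-(n : ℤ))) := by
        rw [neg_neg, neg_neg, show ((n + 1 : ℕ) : ℤ) = (n : ℤ) + 1 by push_cast; ring,
          zpow_add₀ hwne, zpow_one]
        ring
      have eQ : Q ^ ((-((n + 1 : ℕ) : ℤ)) * ((-((n + 1 : ℕ) : ℤ)) + 1) / 2)
          = Q ^ (n : ℕ) * Q ^ ((-(n : ℤ)) * ((-(n : ℤ)) + 1) / 2) := by
        rw [← zpow_natCast Q n, ← zpow_add₀ hQne]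
        congr 1
        rw [show ((n + 1 : ℕ) : ℤ) = (n : ℤ) + 1 by push_cast; ring]
        rw [show (-((n:ℤ) + 1)) * ((-((n:ℤ) + 1)) + 1) = (n:ℤ) * ((n:ℤ) + 1) by ring,
          show (-(n:ℤ)) * ((-(n:ℤ)) + 1) = (n:ℤ) * ((n:ℤ) - 1) by ring]
        have h1 : (2:ℤ) ∣ (n:ℤ) * ((n:ℤ) + 1) := (Int.even_mul_succ_self _).two_dvd
        have h2 : (2:ℤ) ∣ (n:ℤ) * ((n:ℤ) - 1) := by
          have := (Int.even_mul_succ_self ((n:ℤ) - 1)).two_dvd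
          have e : ((n:ℤ) - 1) * (((n:ℤ) - 1) + 1) = (n:ℤ) * ((n:ℤ) - 1) := by ring
          rwa [e] at this
        have h3 : (n:ℤ) * ((n:ℤ) + 1) = (n:ℤ) * ((n:ℤ) - 1) + 2 * (n:ℤ) := by ring
        omega
      rw [ew, eQ]
      ring
    rw [Real.norm_eq_abs, Real.norm_eq_abs, abs_abs, abs_abs, key]
    have hTnn : (0:ℝ) ≤ |Tj Q w (-(n : ℤ))| := abs_nonneg _
    have hr : w * Q ^ n ≤ 1/2 := by
      calc w * Q ^ n ≤ w * (1 / (2 * w)) :=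
            mul_le_mul_of_nonneg_left hn hw0.le
        _ = 1/2 := by field_simp
    exact mul_le_mul_of_nonneg_right hr hTnn
end summab
noncomputable def hN (Q w : ℝ) (N : ℕ) (j : ℤ) : ℝ :=
  if j.natAbs ≤ N then Bq Q (2 * N) (j + N).toNat * Tj Q w j else 0

section hn
variable {Q w : ℝ}

lemma hN_tsum (N : ℕ) : ∑' j : ℤ, hN Q w N j
    = ∑ k ∈ Finset.range (2 * N + 1), Bq Q (2 * N) k * Tj Q w ((k : ℤ) - N) := by
  rw [tsum_eq_sum (s := Finset.Icc (-(N:ℤ)) N)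
    (by intro j hj; rw [hN, if_neg]; simp [Finset.mem_Icc] at hj; omega)]
  apply Finset.sum_nbij' (i := fun j : ℤ => (j + N).toNat) (j := fun k : ℕ => (k : ℤ) - N)
  · intro a ha
    simp only [Finset.mem_Icc] at ha
    simp only [Finset.mem_range]
    omega
  · intro a ha
    simp only [Finset.mem_range] at ha
    simp only [Finset.mem_Icc]
    omega
  · intro a ha
    simp only [Finset.mem_Icc] at ha
    omega
  · intro a ha
    simp only [Finset.mem_range] at ha
    omega
  · intro a ha
    simp only [Finset.mem_Icc] at ha
    rw [hN, if_pos (by omega)]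
    congr 2
    omega

lemma hN_bound (hQ0 : 0 < Q) (hQ1 : Q < 1) (N : ℕ) (j : ℤ) :
    ‖hN Q w N j‖ ≤ (Pinf Q)⁻¹ * |Tj Q w j| := by
  have hPinf := (pinf_hasProd hQ0 hQ1).2
  rw [Real.norm_eq_abs, hN]
  split
  · rw [abs_mul, abs_of_nonneg (Bq_nonneg hQ0 hQ1 _ _)]
    exact mul_le_mul_of_nonneg_right (Bq_le hQ0 hQ1 _ _) (abs_nonneg _)
  · simp
    positivity

lemma hN_tendsto (hQ0 : 0 < Q) (hQ1 : Q < 1) (j : ℤ) :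
    Filter.Tendsto (fun N => hN Q w N j) Filter.atTop (nhds ((Pinf Q)⁻¹ * Tj Q w j)) := by
  have hPinf := (pinf_hasProd hQ0 hQ1).2
  have heq : ∀ᶠ N : ℕ in Filter.atTop, hN Q w N j
      = Ppoch Q (2 * N) / (Ppoch Q ((j + N).toNat) * Ppoch Q (((N:ℤ) - j).toNat)) * Tj Q w j := by
    filter_upwards [Filter.eventually_ge_atTop j.natAbs] with N hNj
    rw [hN, if_pos (by omega), Bq, if_pos (by omega)]
    have e1 : 2 * N - (j + N).toNat = ((N:ℤ) - j).toNat := by omega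
    rw [e1]
  have t2N : Filter.Tendsto (fun N : ℕ => 2 * N) Filter.atTop Filter.atTop :=
    Filter.tendsto_atTop_atTop.mpr (fun b => ⟨b, fun a ha => by omega⟩)
  have tja : Filter.Tendsto (fun N : ℕ => ((j + N).toNat)) Filter.atTop Filter.atTop :=
    Filter.tendsto_atTop_atTop.mpr (fun b => ⟨j.natAbs + b, fun a ha => by omega⟩)
  have tjb : Filter.Tendsto (fun N : ℕ => (((N:ℤ) - j).toNat)) Filter.atTop Filter.atTop :=
    Filter.tendsto_atTop_atTop.mpr (fun b => ⟨j.natAbs + b, fun a ha => by omega⟩)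
  have tP := tendsto_Ppoch hQ0 hQ1
  have h1 : Filter.Tendsto (fun N : ℕ => Ppoch Q (2 * N)) Filter.atTop (nhds (Pinf Q)) :=
    tP.comp t2N
  have h2 : Filter.Tendsto (fun N : ℕ => Ppoch Q ((j + N).toNat)) Filter.atTop (nhds (Pinf Q)) :=
    tP.comp tja
  have h3 : Filter.Tendsto (fun N : ℕ => Ppoch Q (((N:ℤ) - j).toNat)) Filter.atTop
      (nhds (Pinf Q)) := tP.comp tjb
  have hmain := ((h1.div (h2.mul h3) (ne_of_gt (mul_pos hPinf hPinf))).mul_const (Tj Q w j))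
  have hval : Pinf Q / (Pinf Q * Pinf Q) * Tj Q w j = (Pinf Q)⁻¹ * Tj Q w j := by
    field_simp
  rw [hval] at hmain
  exact Filter.Tendsto.congr' (Filter.EventuallyEq.symm heq) hmain
end hn
lemma JTP {Q w : ℝ} (hQ0 : 0 < Q) (hQ1 : Q < 1) (hQw : Q < w) (hw1 : w < 1) :
    HasSum (Tj Q w)
      (Pinf Q * ((∏' n : ℕ, (1 - w * Q ^ n)) * (∏' n : ℕ, (1 - (Q / w) * Q ^ n)))) := by
  have hw0 : 0 < w := lt_trans hQ0 hQw
  have hPinf := (pinf_hasProd hQ0 hQ1).2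
  have habs := summable_absTj hQ0 hQ1 hw0 (w := w)
  have hsumT : Summable (Tj Q w) := habs.of_abs
  have hWprod := hasProd_one_sub hQ0 hQ1 hw0.le hw1
  have hVprod := hasProd_one_sub hQ0 hQ1 (le_of_lt (div_pos hQ0 hw0))
    ((div_lt_one hw0).mpr hQw)
  set W : ℝ := ∏' n : ℕ, (1 - w * Q ^ n) with hW
  set V : ℝ := ∏' n : ℕ, (1 - (Q / w) * Q ^ n) with hV
  -- limit of partial products
  have lim1 : Filter.Tendsto
      (fun N => (∏ m ∈ Finset.range N, (1 - w * Q ^ m)) *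
        (∏ m ∈ Finset.range N, (1 - (Q / w) * Q ^ m))) Filter.atTop (nhds (W * V)) :=
    (hWprod.1.tendsto_prod_nat).mul (hVprod.1.tendsto_prod_nat)
  -- dominated convergence
  have lim2 : Filter.Tendsto (fun N => ∑' j : ℤ, hN Q w N j) Filter.atTop
      (nhds (∑' j : ℤ, (Pinf Q)⁻¹ * Tj Q w j)) := by
    apply tendsto_tsum_of_dominated_convergence (bound := fun j => (Pinf Q)⁻¹ * |Tj Q w j|)
      (habs.mul_left _) (fun j => hN_tendsto hQ0 hQ1 j)
    exact Filter.Eventually.of_forall (fun N j => hN_bound hQ0 hQ1 N j)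
  -- identify the two sequences
  have same : ∀ N : ℕ, (∏ m ∈ Finset.range N, (1 - w * Q ^ m)) *
        (∏ m ∈ Finset.range N, (1 - (Q / w) * Q ^ m)) = ∑' j : ℤ, hN Q w N j := by
    intro N
    rw [hN_tsum, star_id hQ0 hQ1 hw0]
  rw [Filter.tendsto_congr same] at lim1
  have huniq : W * V = ∑' j : ℤ, (Pinf Q)⁻¹ * Tj Q w j := tendsto_nhds_unique lim1 lim2
  rw [tsum_mul_left] at huniq
  have htsum : ∑' j : ℤ, Tj Q w j = Pinf Q * (W * V) := by
    rw [huniq]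
    field_simp
  have := hsumT.hasSum
  rwa [htsum] at this
/-- The q-Pochhammer infinite product `(a;q)_∞ = ∏_{n=0}^∞ (1 - a qⁿ)`. -/
noncomputable def qPoch (a q : ℝ) : ℝ := ∏' n : ℕ, (1 - a * q ^ n)

/-- The "Agile" `[a,p;q] = (q^{p-a};q^p)_∞ (q^a;q^p)_∞`. -/
noncomputable def agile (a p q : ℝ) : ℝ :=
  qPoch (q ^ (p - a)) (q ^ p) * qPoch (q ^ a) (q ^ p)

/-- `M(c,Q) = ∑_{n=0}^∞ cⁿ Q^{n(n+1)/2}`. -/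
noncomputable def Mfun (c Q : ℝ) : ℝ := ∑' n : ℕ, c ^ n * Q ^ (n * (n + 1) / 2)

/-- Application 2, equation (38): for `0 < q < 1`, `p > 0` and `0 < a < p`,
`M(-q^{-a}, q^p) - q^a M(-q^a, q^p) = f(-q^p) [a,p;q]`. -/
theorem Mfun_agile (a p q : ℝ)
    (hq0 : 0 < q) (hq1 : q < 1) (hp : 0 < p) (ha0 : 0 < a) (hap : a < p) :
    Mfun (-q ^ (-a)) (q ^ p) - q ^ a * Mfun (-q ^ a) (q ^ p) =
      qPoch (q ^ p) (q ^ p) * agile a p q := by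
  set Q : ℝ := q ^ p with hQ
  set w : ℝ := q ^ a with hw
  have hQ0 : 0 < Q := Real.rpow_pos_of_pos hq0 p
  have hQ1 : Q < 1 := Real.rpow_lt_one hq0.le hq1 hp
  have hw0 : 0 < w := Real.rpow_pos_of_pos hq0 a
  have hw1 : w < 1 := Real.rpow_lt_one hq0.le hq1 ha0
  have hQw : Q < w := Real.rpow_lt_rpow_of_exponent_gt hq0 hq1 hap
  have hwne : w ≠ 0 := ne_of_gt hw0
  have hjtp := JTP hQ0 hQ1 hQw hw1
  -- summability pieces
  have hsumT : Summable (Tj Q w) := hjtp.summable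
  have h1 : Summable (fun n : ℕ => Tj Q w (n : ℤ)) :=
    hsumT.comp_injective (fun m n hmn => by exact_mod_cast hmn)
  have h2 : Summable (fun n : ℕ => Tj Q w (Int.negSucc n)) :=
    hsumT.comp_injective (fun m n hmn => by
      simp only [Int.negSucc_eq] at hmn
      omega)
  have hint : HasSum (Tj Q w)
      ((∑' n : ℕ, Tj Q w (n : ℤ)) + ∑' n : ℕ, Tj Q w (Int.negSucc n)) := by
    have h := HasSum.int_rec h1.hasSum h2.hasSum
    have e : (Int.rec (fun n : ℕ => Tj Q w (n : ℤ)) (fun n : ℕ => Tj Q w (Int.negSucc n)) :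
        ℤ → ℝ) = Tj Q w := by
      funext j
      cases j with
      | ofNat n => rfl
      | negSucc n => rfl
    rwa [e] at h
  have key : (∑' n : ℕ, Tj Q w (n : ℤ)) + (∑' n : ℕ, Tj Q w (Int.negSucc n))
      = Pinf Q * ((∏' n : ℕ, (1 - w * Q ^ n)) * (∏' n : ℕ, (1 - (Q / w) * Q ^ n))) :=
    hint.unique hjtp
  -- identify the positive part with Mfun (-q^(-a)) Q
  have hposid : (∑' n : ℕ, Tj Q w (n : ℤ)) = Mfun (-q ^ (-a)) Q := by
    rw [Mfun]
    apply tsum_congr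
    intro n
    rw [Tj_nat hwne n]
    congr 2
    rw [Real.rpow_neg hq0.le, hw]
  -- identify the negative part
  have hnegid : (∑' n : ℕ, Tj Q w (Int.negSucc n)) = -(q ^ a * Mfun (-q ^ a) Q) := by
    have e : ∀ n : ℕ, Tj Q w (Int.negSucc n) = -(w * ((-w) ^ n * Q ^ (n * (n + 1) / 2))) := by
      intro n
      rw [Int.negSucc_eq]
      exact Tj_negSucc n
    rw [tsum_congr e, tsum_neg, tsum_mul_left, Mfun, hw]
  -- identify the products
  have hPinf_eq : qPoch (q ^ p) (q ^ p) = Pinf Q := by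
    rw [qPoch, Pinf]
    apply tprod_congr
    intro n
    rw [← hQ, pow_succ']
  have hW_eq : qPoch (q ^ a) (q ^ p) = ∏' n : ℕ, (1 - w * Q ^ n) := rfl
  have hV_eq : qPoch (q ^ (p - a)) (q ^ p) = ∏' n : ℕ, (1 - (Q / w) * Q ^ n) := by
    rw [qPoch]
    apply tprod_congr
    intro n
    rw [← hQ, hw]
    congr 2
    rw [Real.rpow_sub hq0]
  rw [hposid, hnegid] at key
  rw [agile, hPinf_eq, hW_eq, hV_eq]
  linear_combination key
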